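/- Let λ ∈ ℂ and let v = (v_i)_{i≥0} be a bounded complex sequence satisfying Sv = λv (i.e. Σ_{j≥0} S_{i,j} v_j = λ v_i for all i ≥ 0). Then v_k = q_k(λ) v_0 for every k ≥ 1; in particular, for every n ≥ 2 and every m with 0 < m < F_{n−1}, v_{F_n+m} v_0 = v_{F_n} v_m. -/
import Mathlib


/-- Fibonacci sequence with `F 0 = 1`, `F 1 = 2`, `F (n+2) = F (n+1) + F n`. -/
def fibF : ℕ → ℕ
  | 0 => 1
  | 1 => 2
  | (n+2) => fibF (n+1) + fibF n

lemma fibF_pos : ∀ n, 0 < fibF n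
  | 0 => by simp [fibF]
  | 1 => by simp [fibF]
  | (n+2) => by
      have h1 := fibF_pos (n+1)
      simp only [fibF]
      omega

/-- Zeckendorf digits of `N` in the base `fibF`: `N = ∑ i, zeck N i * fibF i`,
with `zeck N i ∈ {0,1}` and no two consecutive `1`'s. -/
def zeck (N i : ℕ) : ℕ :=
  if h : N = 0 then 0
  else if i = Nat.findGreatest (fun j => fibF j ≤ N) N then 1
  else zeck (N - fibF (Nat.findGreatest (fun j => fibF j ≤ N) N)) i
termination_by N
decreasing_by
  exact Nat.sub_lt (Nat.pos_of_ne_zero h) (fibF_pos _)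

lemma zeck_eq_zero_of_lt : ∀ N, ∀ i, N < i → zeck N i = 0 := by
  intro N
  induction N using Nat.strong_induction_on with
  | _ N ih =>
    intro i hi
    rw [zeck]
    split
    · rfl
    · rename_i h
      have hkN : Nat.findGreatest (fun j => fibF j ≤ N) N ≤ N := Nat.findGreatest_le N
      rw [if_neg (by omega)]
      exact ih _ (Nat.sub_lt (Nat.pos_of_ne_zero h) (fibF_pos _)) i
        (lt_of_le_of_lt (Nat.sub_le _ _) hi)

lemma exists_break0 (N : ℕ) : ∃ i, ¬(zeck N (2*i+1) = 1 ∧ zeck N (2*i) = 0) := by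
  refine ⟨N + 1, ?_⟩
  have h : zeck N (2*(N+1)+1) = 0 := zeck_eq_zero_of_lt N _ (by omega)
  simp [h]

lemma exists_break1 (N : ℕ) : ∃ i, ¬(zeck N (2*i+2) = 1 ∧ zeck N (2*i+1) = 0) := by
  refine ⟨N + 1, ?_⟩
  have h : zeck N (2*(N+1)+2) = 0 := zeck_eq_zero_of_lt N _ (by omega)
  simp [h]

/-- The number `s` of `10`-blocks carried in the stochastic Fibonacci adding machine:
if the digits of `N` end with `00(10)^s` (case `ε₀ = 0`) or with `00(10)^s1`
(case `ε₀ = 1`), this returns `s`. -/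
def carryLen (N : ℕ) : ℕ :=
  if zeck N 0 = 0 then Nat.find (exists_break0 N) else Nat.find (exists_break1 N)

/-- `Pprod p t = p 1 * p 2 * ⋯ * p t`. -/
def Pprod (p : ℕ → ℝ) (t : ℕ) : ℝ := ∏ i ∈ Finset.Icc 1 t, p i

/-- The transition matrix `S` of the Fibonacci stochastic adding machine associated to
the probability sequence `p`:  `S N N = 1 - p 1`;  if the digits of `N` end with
`00(10)^s` then `S N (N+1) = p 1 ⋯ p (s+1)` and `S N (N+1-F (2m)) = p 1 ⋯ p m * (1 - p (m+1))`
for `1 ≤ m ≤ s`;  if the digits of `N` end with `00(10)^s1` then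
`S N (N+1) = p 1 ⋯ p (s+2)` and `S N (N+1-F (2m-1)) = p 1 ⋯ p m * (1 - p (m+1))` for
`1 ≤ m ≤ s+1`;  all other entries vanish. -/
noncomputable def Smat (p : ℕ → ℝ) (N M : ℕ) : ℝ :=
  (if M = N then 1 - p 1 else 0) +
  if zeck N 0 = 0 then
    (if M = N + 1 then Pprod p (carryLen N + 1) else 0) +
    ∑ m ∈ Finset.Icc 1 (carryLen N),
      (if M = N + 1 - fibF (2*m) then Pprod p m * (1 - p (m+1)) else 0)
  else
    (if M = N + 1 then Pprod p (carryLen N + 2) else 0) +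
    ∑ m ∈ Finset.Icc 1 (carryLen N + 1),
      (if M = N + 1 - fibF (2*m - 1) then Pprod p m * (1 - p (m+1)) else 0)

/-- `rr p n = r_n = p (⌊(n+1)/2⌋ + 1)`. -/
noncomputable def rr (p : ℕ → ℝ) (n : ℕ) : ℝ := p ((n+1)/2 + 1)

/-- `qF p z n = q_{F_n}(z)`. -/
noncomputable def qF (p : ℕ → ℝ) (z : ℂ) : ℕ → ℂ
  | 0 => (z - (1 - (p 1 : ℂ))) / (p 1 : ℂ)
  | 1 => (1 / (p 2 : ℂ)) * (qF p z 0) ^ 2 - (1 / (p 2 : ℂ) - 1)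
  | (n+2) => (1 / (rr p (n+2) : ℂ)) * qF p z (n+1) * qF p z n - (1 / (rr p (n+2) : ℂ) - 1)

/-- `qN p z N = q_N(z) = ∏ᵢ q_{F_i}(z)^{ε_i(N)}` where `(ε_i(N))` are the Zeckendorf
digits of `N`. -/
noncomputable def qN (p : ℕ → ℝ) (z : ℂ) (N : ℕ) : ℂ :=
  ∏ i ∈ Finset.range (N+1), (qF p z i) ^ (zeck N i)


section Zeck

lemma fibF_strictMono : StrictMono fibF := by
  have h : ∀ n, fibF n < fibF (n+1) := by
    intro n
    cases n with
    | zero => simp [fibF]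
    | succ m =>
      have := fibF_pos m
      simp only [fibF]
      omega
  exact strictMono_nat_of_lt_succ h

lemma fibF_mono : Monotone fibF := fibF_strictMono.monotone

lemma lt_fibF (n : ℕ) : n < fibF n := by
  induction n with
  | zero => simp [fibF]
  | succ m ih =>
    have h2 : fibF m < fibF (m+1) := fibF_strictMono (by omega)
    omega

lemma findGreatest_fib_eq {N t : ℕ} (h1 : fibF t ≤ N) (h2 : N < fibF (t+1)) :
    Nat.findGreatest (fun j => fibF j ≤ N) N = t := by
  have htN : t ≤ N := le_trans (le_of_lt (lt_fibF t)) h1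
  have hge : t ≤ Nat.findGreatest (fun j => fibF j ≤ N) N :=
    Nat.le_findGreatest htN h1
  have hle : Nat.findGreatest (fun j => fibF j ≤ N) N ≤ t := by
    by_contra hc
    push_neg at hc
    have hspec : fibF (Nat.findGreatest (fun j => fibF j ≤ N) N) ≤ N :=
      Nat.findGreatest_spec (P := fun j => fibF j ≤ N) (m := t) htN h1
    have : fibF (t+1) ≤ fibF (Nat.findGreatest (fun j => fibF j ≤ N) N) :=
      fibF_mono hc
    omega
  omega

/-- Master structure lemma for `zeck` on positive `N`. -/
lemma zeck_step {N : ℕ} (hN : N ≠ 0) :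
    ∃ t, fibF t ≤ N ∧ N < fibF (t+1) ∧ N - fibF t < fibF t ∧
      zeck N t = 1 ∧ ∀ i, i ≠ t → zeck N i = zeck (N - fibF t) i := by
  set t := Nat.findGreatest (fun j => fibF j ≤ N) N with ht
  have hN1 : 1 ≤ N := Nat.one_le_iff_ne_zero.2 hN
  have h0 : fibF 0 ≤ N := by simpa [fibF] using hN1
  have h1 : fibF t ≤ N := by
    rw [ht]
    exact Nat.findGreatest_spec (P := fun j => fibF j ≤ N) (m := 0) (Nat.zero_le N) h0
  have h2 : N < fibF (t+1) := by
    rcases le_or_gt (t+1) N with h | h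
    · by_contra hc
      push_neg at hc
      exact (Nat.findGreatest_is_greatest (Nat.lt_succ_self t) h) hc
    · have := lt_fibF (t+1)
      omega
  have hdbl : ∀ u, fibF (u+1) ≤ 2 * fibF u := by
    intro u
    cases u with
    | zero => simp [fibF]
    | succ w =>
      have : fibF w ≤ fibF (w+1) := fibF_mono (by omega)
      simp only [fibF]
      omega
  have h3 : N - fibF t < fibF t := by
    have := hdbl t
    omega
  refine ⟨t, h1, h2, h3, ?_, ?_⟩
  · rw [zeck, dif_neg hN, if_pos rfl]
  · intro i hi
    rw [zeck, dif_neg hN, if_neg (by rw [← ht]; exact hi)]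

lemma zeck_eq_zero_of_lt_fib : ∀ N i, N < fibF i → zeck N i = 0 := by
  intro N
  induction N using Nat.strong_induction_on with
  | _ N ih =>
    intro i hi
    rcases Nat.eq_zero_or_pos N with rfl | hN
    · rw [zeck]; simp
    · obtain ⟨t, h1, h2, h3, h4, h5⟩ := zeck_step (Nat.pos_iff_ne_zero.1 hN)
      have hit : i ≠ t := by
        rintro rfl
        omega
      rw [h5 i hit]
      exact ih _ (by omega) i (lt_of_le_of_lt (by omega : N - fibF t ≤ N) hi)

lemma zeck_le_one : ∀ N i, zeck N i ≤ 1 := by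
  intro N
  induction N using Nat.strong_induction_on with
  | _ N ih =>
    intro i
    rcases Nat.eq_zero_or_pos N with rfl | hN
    · rw [zeck]; simp
    · obtain ⟨t, h1, h2, h3, h4, h5⟩ := zeck_step (Nat.pos_iff_ne_zero.1 hN)
      by_cases hit : i = t
      · rw [hit, h4]
      · rw [h5 i hit]
        exact ih _ (by omega) i

lemma zeck_no_consec : ∀ N i, ¬(zeck N i = 1 ∧ zeck N (i+1) = 1) := by
  intro N
  induction N using Nat.strong_induction_on with
  | _ N ih =>
    intro i
    rcases Nat.eq_zero_or_pos N with rfl | hN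
    · rw [zeck]; simp
    · obtain ⟨t, h1, h2, h3, h4, h5⟩ := zeck_step (Nat.pos_iff_ne_zero.1 hN)
      have hz : ∀ j, t ≤ j → zeck (N - fibF t) j = 0 := by
        intro j hj
        exact zeck_eq_zero_of_lt_fib _ j (lt_of_lt_of_le h3 (fibF_mono hj))
      by_cases hi : i = t
      · subst hi
        rw [h5 (i+1) (by omega), hz (i+1) (by omega)]
        simp
      · by_cases hi1 : i + 1 = t
        · rw [h5 i (by omega)]
          have h3' : N - fibF t < fibF i := by
            have he : fibF (i+1+1) = fibF (i+1) + fibF i := rfl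
            have hft : fibF t = fibF (i+1) := by rw [hi1]
            rw [← hi1] at h2
            omega
          rw [zeck_eq_zero_of_lt_fib _ i h3']
          simp
        · rw [h5 i hi, h5 (i+1) hi1]
          exact ih _ (by omega) i

lemma zeck_sum : ∀ N K, N < K → ∑ i ∈ Finset.range K, zeck N i * fibF i = N := by
  intro N
  induction N using Nat.strong_induction_on with
  | _ N ih =>
    intro K hK
    rcases Nat.eq_zero_or_pos N with rfl | hN
    · refine Finset.sum_eq_zero ?_
      intro i _
      rw [zeck]; simp
    · obtain ⟨t, h1, h2, h3, h4, h5⟩ := zeck_step (Nat.pos_iff_ne_zero.1 hN)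
      have htK : t ∈ Finset.range K := by
        have := lt_fibF t
        exact Finset.mem_range.2 (by omega)
      rw [← Finset.add_sum_erase _ _ htK, h4]
      have hrest : ∑ i ∈ (Finset.range K).erase t, zeck N i * fibF i
          = ∑ i ∈ (Finset.range K).erase t, zeck (N - fibF t) i * fibF i := by
        refine Finset.sum_congr rfl ?_
        intro i hi
        rw [h5 i (Finset.ne_of_mem_erase hi)]
      rw [hrest]
      have hzt : zeck (N - fibF t) t = 0 := zeck_eq_zero_of_lt_fib _ t h3
      have : ∑ i ∈ (Finset.range K).erase t, zeck (N - fibF t) i * fibF i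
          = ∑ i ∈ Finset.range K, zeck (N - fibF t) i * fibF i := by
        rw [← Finset.add_sum_erase _ _ htK, hzt]
        simp
      rw [this, ih _ (by omega) K (by omega)]
      omega

end Zeck

section Uniq

/-- Sum bound for a valid digit configuration. -/
lemma valid_sum_lt (ε : ℕ → ℕ) (hε1 : ∀ i, ε i ≤ 1)
    (hε2 : ∀ i, ¬(ε i = 1 ∧ ε (i+1) = 1)) :
    ∀ k, ∑ i ∈ Finset.range k, ε i * fibF i < fibF k := by
  intro k
  induction k using Nat.strong_induction_on with
  | _ k ih =>
    match k with
    | 0 => simp [fibF]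
    | 1 =>
      have := hε1 0
      simp only [Finset.sum_range_one, fibF]
      interval_cases h : ε 0 <;> simp
    | (n+2) =>
      have hfe : fibF (n+2) = fibF (n+1) + fibF n := rfl
      rcases Nat.lt_or_ge (ε (n+1)) 1 with h | h
      · have h0 : ε (n+1) = 0 := by omega
        rw [Finset.sum_range_succ, h0]
        have := ih (n+1) (by omega)
        have : fibF (n+1) ≤ fibF (n+2) := fibF_mono (by omega)
        omega
      · have h1 : ε (n+1) = 1 := le_antisymm (hε1 _) h
        have h0 : ε n = 0 := by
          have := hε2 n
          have := hε1 n
          omega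
        rw [Finset.sum_range_succ, Finset.sum_range_succ, h0, h1]
        have := ih n (by omega)
        omega

/-- Uniqueness of Zeckendorf representation. -/
lemma zeck_unique : ∀ N (ε : ℕ → ℕ) (K : ℕ), (∀ i, ε i ≤ 1) →
    (∀ i, ¬(ε i = 1 ∧ ε (i+1) = 1)) → (∀ i, K ≤ i → ε i = 0) →
    N = ∑ i ∈ Finset.range K, ε i * fibF i → ∀ i, zeck N i = ε i := by
  intro N
  induction N using Nat.strong_induction_on with
  | _ N ih =>
    intro ε K hε1 hε2 hsupp hsum i
    rcases Nat.eq_zero_or_pos N with rfl | hN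
    · have hz : ∀ j, ε j = 0 := by
        intro j
        rcases Nat.lt_or_ge j K with hj | hj
        · have h0 : ∑ i ∈ Finset.range K, ε i * fibF i = 0 := hsum.symm
          rw [Finset.sum_eq_zero_iff] at h0
          rcases Nat.mul_eq_zero.1 (h0 j (Finset.mem_range.2 hj)) with h | h
          · exact h
          · have := fibF_pos j
            omega
        · exact hsupp j hj
      rw [hz i, zeck]; simp
    · -- t = greatest index with ε t = 1
      set t := Nat.findGreatest (fun j => ε j = 1) K with htdef
      have hex : ∃ j, j < K ∧ ε j = 1 := by
        by_contra hc
        push_neg at hc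
        have : ∀ j ∈ Finset.range K, ε j * fibF j = 0 := by
          intro j hj
          have h := hc j (Finset.mem_range.1 hj)
          have := hε1 j
          have : ε j = 0 := by omega
          simp [this]
        rw [Finset.sum_eq_zero this] at hsum
        omega
      obtain ⟨j0, hj0K, hj0⟩ := hex
      have hεt : ε t = 1 :=
        Nat.findGreatest_spec (P := fun j => ε j = 1) (m := j0) (by omega) hj0
      have htK : t < K := by
        by_contra hc
        push_neg at hc
        have := hsupp t hc
        omega
      have htop : ∀ j, t < j → ε j = 0 := by
        intro j hj
        rcases Nat.lt_or_ge j (K+1) with hjK | hjK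
        · have := Nat.findGreatest_is_greatest (P := fun j => ε j = 1) hj (by omega)
          have := hε1 j
          omega
        · exact hsupp j (by omega)
      -- N = sum over range (t+1)
      have hsum' : N = ∑ i ∈ Finset.range (t+1), ε i * fibF i := by
        rw [hsum]
        symm
        apply Finset.sum_subset
        · intro x hx
          simp only [Finset.mem_range] at hx ⊢
          omega
        · intro x _ hx
          simp only [Finset.mem_range, not_lt] at hx
          rw [htop x (by omega)]
          simp
      have hlow : fibF t ≤ N := by
        rw [hsum']
        calc fibF t = ε t * fibF t := by rw [hεt]; ring
        _ ≤ _ := Finset.single_le_sum (f := fun i => ε i * fibF i)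
              (fun i _ => Nat.zero_le _) (Finset.self_mem_range_succ t)
      have hhigh : N < fibF (t+1) := by
        rw [hsum']
        exact valid_sum_lt ε hε1 hε2 (t+1)
      have hfg : Nat.findGreatest (fun j => fibF j ≤ N) N = t :=
        findGreatest_fib_eq hlow hhigh
      have hNe : N ≠ 0 := by omega
      by_cases hit : i = t
      · rw [hit, zeck, dif_neg hNe, if_pos hfg.symm, hεt]
      · rw [zeck, dif_neg hNe, if_neg (by rw [hfg]; exact hit), hfg]
        -- apply IH to N - fibF t with config ε' = ε except 0 at t
        set ε' : ℕ → ℕ := fun j => if j = t then 0 else ε j with hε'def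
        have hs' : N - fibF t = ∑ i ∈ Finset.range K, ε' i * fibF i := by
          have : ∑ i ∈ Finset.range K, ε i * fibF i
              = ε t * fibF t + ∑ i ∈ Finset.range K, ε' i * fibF i := by
            rw [← Finset.add_sum_erase _ _ (Finset.mem_range.2 htK)]
            congr 1
            · rw [← Finset.add_sum_erase _ (fun i => ε' i * fibF i)
                (Finset.mem_range.2 htK)]
              have : ε' t = 0 := by simp [hε'def]
              rw [this]
              simp only [zero_mul, zero_add]
              apply Finset.sum_congr rfl
              intro x hx
              have : x ≠ t := Finset.ne_of_mem_erase hx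
              simp [hε'def, this]
          rw [hεt] at this
          omega
        have hres := ih (N - fibF t) (by have := fibF_pos t; omega) ε' K
          (fun j => by by_cases h : j = t <;> simp [hε'def, h, hε1 j])
          (fun j => by
            by_cases h : j = t <;> by_cases h' : j + 1 = t <;>
              simp [hε'def, h, h'] <;> exact fun hh => by
                have := hε2 j; omega)
          (fun j hj => by
            have := hsupp j hj
            simp [hε'def, this])
          hs' i
        rw [hres]
        simp [hε'def, hit]

lemma sum_fib_odd : ∀ s, ∑ j ∈ Finset.range s, fibF (2*j+1) + 1 = fibF (2*s)
  | 0 => by simp [fibF]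
  | (s+1) => by
      rw [Finset.sum_range_succ]
      have h := sum_fib_odd s
      have he : fibF (2*(s+1)) = fibF (2*s+1) + fibF (2*s) := by
        have : 2*(s+1) = (2*s)+2 := by ring
        rw [this]
        rfl
      have : 2*s+1 = 2*s+1 := rfl
      omega

lemma sum_fib_even : ∀ s, ∑ j ∈ Finset.range (s+1), fibF (2*j) + 1 = fibF (2*s+1)
  | 0 => by simp [fibF]
  | (s+1) => by
      rw [Finset.sum_range_succ]
      have h := sum_fib_even s
      have he : fibF (2*(s+1)+1) = fibF (2*(s+1)) + fibF (2*s+1) := by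
        have : 2*(s+1)+1 = (2*s+1)+2 := by ring
        rw [this]
        have : 2*(s+1) = 2*s+1+1 := by ring
        rw [this]
        rfl
      omega

end Uniq

section Alg

lemma pair_prod {M : Type*} [CommMonoid M] (g : ℕ → M) :
    ∀ n, ∏ i ∈ Finset.range (2*n), g i = ∏ j ∈ Finset.range n, (g (2*j) * g (2*j+1)) := by
  intro n
  induction n with
  | zero => simp
  | succ m ih =>
    have h2 : 2*(m+1) = (2*m)+1+1 := by ring
    rw [h2, Finset.prod_range_succ, Finset.prod_range_succ, ih, Finset.prod_range_succ,
      mul_assoc]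

lemma pair_sum (g : ℕ → ℕ) :
    ∀ n, ∑ i ∈ Finset.range (2*n), g i = ∑ j ∈ Finset.range n, (g (2*j) + g (2*j+1)) := by
  intro n
  induction n with
  | zero => simp
  | succ m ih =>
    have h2 : 2*(m+1) = (2*m)+1+1 := by ring
    rw [h2, Finset.sum_range_succ, Finset.sum_range_succ, ih, Finset.sum_range_succ]
    omega

lemma qN_eq_prod (p : ℕ → ℝ) (z : ℂ) (N K : ℕ) (h : N < K) :
    qN p z N = ∏ i ∈ Finset.range K, (qF p z i) ^ (zeck N i) := by
  unfold qN
  apply Finset.prod_subset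
  · intro x hx
    simp only [Finset.mem_range] at hx ⊢
    omega
  · intro x _ hx
    simp only [Finset.mem_range, not_lt] at hx
    rw [zeck_eq_zero_of_lt N x (by omega)]
    rfl

lemma Pprod_succ (p : ℕ → ℝ) (t : ℕ) : Pprod p (t+1) = Pprod p t * p (t+1) := by
  unfold Pprod
  rw [← Finset.prod_Icc_succ_top (by omega : 1 ≤ t+1)]

lemma Pprod_one (p : ℕ → ℝ) : Pprod p 1 = p 1 := by
  simp [Pprod]

lemma Pprod_pos (p : ℕ → ℝ) (hp : ∀ i, 1 ≤ i → 0 < p i) (t : ℕ) : 0 < Pprod p t := by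
  unfold Pprod
  apply Finset.prod_pos
  intro i hi
  exact hp i (Finset.mem_Icc.1 hi).1

lemma rr_even (p : ℕ → ℝ) (s : ℕ) : rr p (2*s+2) = p (s+2) := by
  unfold rr
  congr 1
  omega

lemma rr_odd (p : ℕ → ℝ) (s : ℕ) : rr p (2*s+3) = p (s+3) := by
  unfold rr
  congr 1
  omega

lemma qF_even_rec (p : ℕ → ℝ) (z : ℂ) (s : ℕ) (hps : p (s+2) ≠ 0) :
    (p (s+2) : ℂ) * qF p z (2*s+2) =
      qF p z (2*s+1) * qF p z (2*s) - (1 - (p (s+2) : ℂ)) := by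
  have h : qF p z (2*s+2) = (1 / (rr p (2*s+2) : ℂ)) * qF p z (2*s+1) * qF p z (2*s)
      - (1 / (rr p (2*s+2) : ℂ) - 1) := rfl
  rw [h, rr_even]
  have : (p (s+2) : ℂ) ≠ 0 := by exact_mod_cast hps
  field_simp

lemma qF_odd_rec (p : ℕ → ℝ) (z : ℂ) (s : ℕ) (hps : p (s+3) ≠ 0) :
    (p (s+3) : ℂ) * qF p z (2*s+3) =
      qF p z (2*s+2) * qF p z (2*s+1) - (1 - (p (s+3) : ℂ)) := by
  have h : qF p z (2*s+3) = (1 / (rr p (2*s+3) : ℂ)) * qF p z (2*s+2) * qF p z (2*s+1)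
      - (1 / (rr p (2*s+3) : ℂ) - 1) := rfl
  rw [h, rr_odd]
  have : (p (s+3) : ℂ) ≠ 0 := by exact_mod_cast hps
  field_simp

lemma qF_one_rec (p : ℕ → ℝ) (z : ℂ) (hps : p 2 ≠ 0) :
    (p 2 : ℂ) * qF p z 1 = qF p z 0 ^ 2 - (1 - (p 2 : ℂ)) := by
  have h : qF p z 1 = (1 / (p 2 : ℂ)) * (qF p z 0) ^ 2 - (1 / (p 2 : ℂ) - 1) := rfl
  rw [h]
  have : (p 2 : ℂ) ≠ 0 := by exact_mod_cast hps
  field_simp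

/-- Scalar identity, even case. -/
lemma idE (p : ℕ → ℝ) (hp : ∀ i, 1 ≤ i → p i ≠ 0) (z : ℂ) :
    ∀ s, (p 1 : ℂ) * qF p z 0 * ∏ j ∈ Finset.range s, qF p z (2*j+1)
      = (Pprod p (s+1) : ℂ) * qF p z (2*s)
        + ∑ m ∈ Finset.Icc 1 s,
            (Pprod p m : ℂ) * (1 - (p (m+1) : ℂ)) * ∏ j ∈ Finset.Ico m s, qF p z (2*j+1) := by
  intro s
  induction s with
  | zero =>
    simp [Pprod_one]
  | succ s ih =>
    have hq : (Pprod p (s+2) : ℂ) * qF p z (2*(s+1)) =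
        (Pprod p (s+1) : ℂ) * (qF p z (2*s+1) * qF p z (2*s) - (1 - (p (s+2) : ℂ))) := by
      have h1 : 2*(s+1) = 2*s+2 := by ring
      rw [h1]
      have h2 := qF_even_rec p z s (hp (s+2) (by omega))
      have h3 : (Pprod p (s+2) : ℂ) = (Pprod p (s+1) : ℂ) * (p (s+2) : ℂ) := by
        push_cast [Pprod_succ]
        ring
      rw [h3, mul_assoc, h2]
    have hsum : ∑ m ∈ Finset.Icc 1 (s+1),
        (Pprod p m : ℂ) * (1 - (p (m+1) : ℂ)) * ∏ j ∈ Finset.Ico m (s+1), qF p z (2*j+1)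
      = (Pprod p (s+1) : ℂ) * (1 - (p (s+2) : ℂ))
        + (∑ m ∈ Finset.Icc 1 s,
            (Pprod p m : ℂ) * (1 - (p (m+1) : ℂ)) * ∏ j ∈ Finset.Ico m s, qF p z (2*j+1))
          * qF p z (2*s+1) := by
      rw [Finset.sum_Icc_succ_top (by omega : 1 ≤ s+1)]
      rw [Finset.sum_mul]
      have hempty : Finset.Ico (s+1) (s+1) = ∅ := by simp
      rw [hempty]
      simp only [Finset.prod_empty, mul_one]
      rw [add_comm]
      congr 1
      apply Finset.sum_congr rfl
      intro m hm
      have hms : m ≤ s := (Finset.mem_Icc.1 hm).2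
      rw [Finset.prod_Ico_succ_top (by omega : m ≤ s)]
      ring
    rw [Finset.prod_range_succ, hq, hsum, ← mul_assoc]
    rw [ih]
    ring
/-- Scalar identity, odd case. -/
lemma idO (p : ℕ → ℝ) (hp : ∀ i, 1 ≤ i → p i ≠ 0) (z : ℂ) :
    ∀ s, (p 1 : ℂ) * qF p z 0 * ∏ j ∈ Finset.range (s+1), qF p z (2*j)
      = (Pprod p (s+2) : ℂ) * qF p z (2*s+1)
        + ∑ m ∈ Finset.Icc 1 (s+1),
            (Pprod p m : ℂ) * (1 - (p (m+1) : ℂ)) * ∏ j ∈ Finset.Icc m s, qF p z (2*j) := by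
  intro s
  induction s with
  | zero =>
    have h2 := qF_one_rec p z (hp 2 (by omega))
    have h3 : ((Pprod p 2 : ℝ) : ℂ) = (p 1 : ℂ) * (p 2 : ℂ) := by
      have h4 : Pprod p 2 = Pprod p 1 * p 2 := Pprod_succ p 1
      rw [h4, Pprod_one]
      push_cast
      ring
    have he : Finset.Icc 1 (0:ℕ) = ∅ := by simp
    simp only [Finset.prod_range_one, Finset.Icc_self, Finset.sum_singleton, he,
      Finset.prod_empty, mul_one, Pprod_one]
    norm_num
    rw [h3]
    have hp2 : ((p (1+1) : ℝ) : ℂ) = (p 2 : ℂ) := by norm_num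
    rw [hp2]
    linear_combination (-(p 1 : ℂ)) * h2
  | succ s ih =>
    have hq : (Pprod p (s+3) : ℂ) * qF p z (2*(s+1)+1) =
        (Pprod p (s+2) : ℂ) * (qF p z (2*s+2) * qF p z (2*s+1) - (1 - (p (s+3) : ℂ))) := by
      have h1 : 2*(s+1)+1 = 2*s+3 := by ring
      rw [h1]
      have h2 := qF_odd_rec p z s (hp (s+3) (by omega))
      have h3 : (Pprod p (s+3) : ℂ) = (Pprod p (s+2) : ℂ) * (p (s+3) : ℂ) := by
        push_cast [Pprod_succ]
        ring
      rw [h3, mul_assoc, h2]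
    have hsum : ∑ m ∈ Finset.Icc 1 (s+2),
        (Pprod p m : ℂ) * (1 - (p (m+1) : ℂ)) * ∏ j ∈ Finset.Icc m (s+1), qF p z (2*j)
      = (Pprod p (s+2) : ℂ) * (1 - (p (s+3) : ℂ))
        + (∑ m ∈ Finset.Icc 1 (s+1),
            (Pprod p m : ℂ) * (1 - (p (m+1) : ℂ)) * ∏ j ∈ Finset.Icc m s, qF p z (2*j))
          * qF p z (2*(s+1)) := by
      rw [Finset.sum_Icc_succ_top (by omega : 1 ≤ s+2)]
      rw [Finset.sum_mul]
      have hempty : Finset.Icc (s+2) (s+1) = ∅ := by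
        apply Finset.Icc_eq_empty
        omega
      rw [hempty]
      simp only [Finset.prod_empty, mul_one]
      rw [add_comm]
      congr 1
      · apply Finset.sum_congr rfl
        intro m hm
        have hms : m ≤ s+1 := (Finset.mem_Icc.1 hm).2
        rw [Finset.prod_Icc_succ_top (by omega : m ≤ s+1)]
        have h5 : (2*(s+1) : ℕ) = 2*s+2 := by ring
        rw [h5]
        ring
    have e1 : s+1+2 = s+3 := rfl
    have e2 : s+1+1 = s+2 := rfl
    rw [e1, e2, Finset.prod_range_succ, hq, hsum, ← mul_assoc, ih]
    generalize (∑ m ∈ Finset.Icc 1 (s+1),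
      (Pprod p m : ℂ) * (1 - (p (m+1) : ℂ)) * ∏ j ∈ Finset.Icc m s, qF p z (2*j)) = S
    ring

section Sums

lemma sum_fib_odd_Ico : ∀ s m : ℕ, m ≤ s →
    ∑ j ∈ Finset.Ico m s, fibF (2*j+1) + fibF (2*m) = fibF (2*s) := by
  intro s
  induction s with
  | zero =>
    intro m hm
    interval_cases m
    simp
  | succ s ih =>
    intro m hm
    rcases Nat.lt_or_ge m (s+1) with h | h
    · have hms : m ≤ s := by omega
      rw [Finset.sum_Ico_succ_top hms]
      have he : fibF (2*(s+1)) = fibF (2*s+1) + fibF (2*s) := by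
        rw [show 2*(s+1) = (2*s)+2 by ring]
        rfl
      have := ih m hms
      omega
    · have : m = s+1 := by omega
      subst this
      simp
lemma sum_fib_even_Icc : ∀ s m : ℕ, m ≤ s+1 →
    ∑ j ∈ Finset.Icc m s, fibF (2*j) + fibF (2*m-1) = fibF (2*s+1) := by
  intro s
  induction s with
  | zero =>
    intro m hm
    interval_cases m
    · simp [fibF]
    · have : Finset.Icc 1 0 = (∅ : Finset ℕ) := by simp
      rw [this]
      simp [fibF]
  | succ s ih =>
    intro m hm
    rcases Nat.lt_or_ge m (s+2) with h | h
    · have hms : m ≤ s+1 := by omega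
      rw [Finset.sum_Icc_succ_top hms]
      have he : fibF (2*(s+1)+1) = fibF (2*(s+1)) + fibF (2*s+1) := by
        rw [show 2*(s+1)+1 = (2*s+1)+2 by ring, show 2*(s+1) = (2*s+1)+1 by ring]
        rfl
      have := ih m hms
      omega
    · have : m = s+2 := by omega
      subst this
      have : Finset.Icc (s+2) (s+1) = (∅ : Finset ℕ) := Finset.Icc_eq_empty (by omega)
      rw [this]
      simp [show 2*(s+2)-1 = 2*(s+1)+1 by omega]

end Sums

section Struct

lemma qN_even (p : ℕ → ℝ) (z : ℂ) (N : ℕ) (hε0 : zeck N 0 = 0) :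
    ∃ QA : ℂ,
      fibF (2 * carryLen N) ≤ N + 1 ∧
      qN p z (N+1) = qF p z (2 * carryLen N) * QA ∧
      (∀ m, m ≤ carryLen N → qN p z (N + 1 - fibF (2*m))
          = (∏ j ∈ Finset.Ico m (carryLen N), qF p z (2*j+1)) * QA) := by
  have hfind0 : carryLen N = Nat.find (exists_break0 N) := by
    unfold carryLen
    rw [if_pos hε0]
  obtain ⟨s, hgen⟩ : ∃ s, carryLen N = s := ⟨_, rfl⟩
  rw [hgen]
  have hfind : s = Nat.find (exists_break0 N) := by rw [← hgen, hfind0]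
  -- digit pattern
  have hpat : ∀ i, i < s → zeck N (2*i+1) = 1 ∧ zeck N (2*i) = 0 := by
    intro i hi
    rw [hfind] at hi
    exact not_not.1 (Nat.find_min (exists_break0 N) hi)
  have hspec : ¬(zeck N (2*s+1) = 1 ∧ zeck N (2*s) = 0) := by
    rw [hfind]
    exact Nat.find_spec (exists_break0 N)
  have h2s : zeck N (2*s) = 0 := by
    rcases Nat.eq_zero_or_pos s with h0 | hpos
    · rw [h0]
      simpa using hε0
    · have h1 := (hpat (s-1) (by omega)).1
      have : 2*(s-1)+1+1 = 2*s := by omega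
      have hnc := zeck_no_consec N (2*(s-1)+1)
      have hle := zeck_le_one N (2*s)
      rw [this] at hnc
      omega
  have h2s1 : zeck N (2*s+1) = 0 := by
    have := zeck_le_one N (2*s+1)
    omega
  -- low partial sums of N's digits
  have htail : ∀ u, u ≤ s → ∑ i ∈ Finset.range (2*u), zeck N i * fibF i + 1 = fibF (2*u) := by
    intro u
    induction u with
    | zero => simp [fibF]
    | succ u ihu =>
      intro hu
      have h1 := (hpat u (by omega)).1
      have h2 := (hpat u (by omega)).2
      rw [show 2*(u+1) = (2*u)+1+1 by ring, Finset.sum_range_succ, Finset.sum_range_succ,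
        h1, h2]
      have he : fibF (2*u+2) = fibF (2*u+1) + fibF (2*u) := rfl
      have := ihu (by omega)
      rw [show (2*u)+1+1 = 2*u+2 by ring] at he ⊢
      omega
  set K := 2*s+2+(N+1) with hK
  have hKN : N < K := by omega
  have hNsum := zeck_sum N K hKN
  rw [hK, Finset.sum_range_add] at hNsum
  set Shigh := ∑ i ∈ Finset.range (N+1), zeck N (2*s+2+i) * fibF (2*s+2+i) with hSh
  have hlowN : ∑ i ∈ Finset.range (2*s+2), zeck N i * fibF i + 1 = fibF (2*s) := by
    rw [show 2*s+2 = (2*s)+1+1 by ring, Finset.sum_range_succ, Finset.sum_range_succ,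
      h2s, h2s1]
    simpa using htail s le_rfl
  have hShigh : Shigh + fibF (2*s) = N + 1 := by omega
  have hfub : fibF (2*s) ≤ N + 1 := by omega
  -- the common high factor
  refine ⟨∏ i ∈ Finset.range (N+1), qF p z (2*s+2+i) ^ zeck N (2*s+2+i), hfub, ?_, ?_⟩
  · -- N+1
    set ε : ℕ → ℕ := fun i => if i < 2*s+2 then (if i = 2*s then 1 else 0) else zeck N i
      with hε
    have hz : ∀ i, zeck (N+1) i = ε i := by
      apply zeck_unique (N+1) ε K
      · intro i
        simp only [hε]
        split_ifs <;> simp [zeck_le_one]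
      · intro i
        simp only [hε]
        split_ifs
        all_goals first
          | exact zeck_no_consec N i
          | omega
          | simp
          | (intro hcon; exact absurd hcon.1 (by omega))
          | (intro hcon; exact absurd hcon.2 (by omega))
      · intro i hi
        simp only [hε]
        rw [if_neg (by omega)]
        exact zeck_eq_zero_of_lt N i (by omega)
      · -- sum
        rw [Finset.sum_range_add]
        have hlow : ∑ i ∈ Finset.range (2*s+2), ε i * fibF i = fibF (2*s) := by
          have hc : ∑ i ∈ Finset.range (2*s+2), ε i * fibF i
              = ∑ i ∈ Finset.range (2*s+2), (if i = 2*s then 1 else 0) * fibF i := by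
            apply Finset.sum_congr rfl
            intro i hi
            have hi' : i < 2*s+2 := Finset.mem_range.1 hi
            simp only [hε, if_pos hi']
          rw [hc]
          have hval := Finset.sum_eq_single_of_mem (s := Finset.range (2*s+2))
            (f := fun i => (if i = 2*s then 1 else 0) * fibF i) (2*s)
            (Finset.mem_range.2 (by omega)) (fun b _ hb => by simp [hb])
          simpa using hval
        have hhigh : ∑ i ∈ Finset.range (N+1), ε (2*s+2+i) * fibF (2*s+2+i) = Shigh := by
          apply Finset.sum_congr rfl
          intro i _
          simp only [hε]
          rw [if_neg (by omega)]
        rw [hlow, hhigh]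
        omega
    rw [qN_eq_prod p z (N+1) K (by omega)]
    rw [Finset.prod_congr rfl (fun i _ => by rw [hz i])]
    rw [hK, Finset.prod_range_add]
    congr 1
    · -- low product = qF (2s)
      have hc : (∏ i ∈ Finset.range (2*s+2), qF p z i ^ ε i)
          = ∏ i ∈ Finset.range (2*s+2), qF p z i ^ (if i = 2*s then 1 else 0) := by
        apply Finset.prod_congr rfl
        intro i hi
        have hi' : i < 2*s+2 := Finset.mem_range.1 hi
        simp only [hε, if_pos hi']
      rw [hc]
      have hval := Finset.prod_eq_single_of_mem (s := Finset.range (2*s+2))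
        (f := fun i => qF p z i ^ (if i = 2*s then 1 else 0)) (2*s)
        (Finset.mem_range.2 (by omega)) (fun b _ hb => by simp [hb])
      simpa using hval
    · apply Finset.prod_congr rfl
      intro i _
      simp only [hε]
      rw [if_neg (by omega)]
  · -- N+1 - fibF (2m)
    intro m hm
    have hfm : fibF (2*m) ≤ fibF (2*s) := fibF_mono (by omega)
    set ε : ℕ → ℕ := fun i =>
      if i < 2*s+2 then (if i % 2 = 1 ∧ 2*m+1 ≤ i ∧ i < 2*s then 1 else 0) else zeck N i
      with hε
    have hlowsum : ∑ j ∈ Finset.Ico m s, fibF (2*j+1) + fibF (2*m) = fibF (2*s) :=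
      sum_fib_odd_Ico s m hm
    have hz : ∀ i, zeck (N + 1 - fibF (2*m)) i = ε i := by
      apply zeck_unique _ ε K
      · intro i
        simp only [hε]
        split_ifs <;> simp [zeck_le_one]
      · intro i
        simp only [hε]
        split_ifs
        all_goals first
          | exact zeck_no_consec N i
          | omega
          | simp
          | (intro hcon; exact absurd hcon.1 (by omega))
          | (intro hcon; exact absurd hcon.2 (by omega))
      · intro i hi
        simp only [hε]
        rw [if_neg (by omega)]
        exact zeck_eq_zero_of_lt N i (by omega)
      · rw [Finset.sum_range_add]
        have hlow : ∑ i ∈ Finset.range (2*s+2), ε i * fibF i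
            = ∑ j ∈ Finset.Ico m s, fibF (2*j+1) := by
          have hc : ∑ i ∈ Finset.range (2*s+2), ε i * fibF i
              = ∑ i ∈ Finset.range (2*s+2),
                  (if i % 2 = 1 ∧ 2*m+1 ≤ i ∧ i < 2*s then 1 else 0) * fibF i := by
            apply Finset.sum_congr rfl
            intro i hi
            have hi' : i < 2*s+2 := Finset.mem_range.1 hi
            simp only [hε, if_pos hi']
          rw [hc, show 2*s+2 = 2*(s+1) by ring, pair_sum]
          have : ∀ j ∈ Finset.range (s+1),
              (if (2*j) % 2 = 1 ∧ 2*m+1 ≤ 2*j ∧ 2*j < 2*s then 1 else 0) * fibF (2*j)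
              + (if (2*j+1) % 2 = 1 ∧ 2*m+1 ≤ 2*j+1 ∧ 2*j+1 < 2*s then 1 else 0) * fibF (2*j+1)
              = if j ∈ Finset.Ico m s then fibF (2*j+1) else 0 := by
            intro j _
            rw [if_neg (by omega)]
            by_cases hj : m ≤ j ∧ j < s
            · rw [if_pos (by omega), if_pos (Finset.mem_Ico.2 hj)]
              omega
            · rw [if_neg (by omega), if_neg (by simp [Finset.mem_Ico]; omega)]
              simp
          rw [Finset.sum_congr rfl this, Finset.sum_ite_mem]
          congr 1
          rw [Finset.inter_eq_right]
          intro x hx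
          simp only [Finset.mem_Ico] at hx
          exact Finset.mem_range.2 (by omega)
        have hhigh : ∑ i ∈ Finset.range (N+1), ε (2*s+2+i) * fibF (2*s+2+i) = Shigh := by
          apply Finset.sum_congr rfl
          intro i _
          simp only [hε]
          rw [if_neg (by omega)]
        rw [hlow, hhigh]
        omega
    rw [qN_eq_prod p z _ K (by omega)]
    rw [Finset.prod_congr rfl (fun i _ => by rw [hz i])]
    rw [hK, Finset.prod_range_add]
    congr 1
    · -- low product
      have hc : (∏ i ∈ Finset.range (2*s+2), qF p z i ^ ε i)
          = ∏ i ∈ Finset.range (2*s+2),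
              qF p z i ^ (if i % 2 = 1 ∧ 2*m+1 ≤ i ∧ i < 2*s then 1 else 0) := by
        apply Finset.prod_congr rfl
        intro i hi
        have hi' : i < 2*s+2 := Finset.mem_range.1 hi
        simp only [hε, if_pos hi']
      rw [hc, show 2*s+2 = 2*(s+1) by ring, pair_prod]
      have : ∀ j ∈ Finset.range (s+1),
          qF p z (2*j) ^ (if (2*j) % 2 = 1 ∧ 2*m+1 ≤ 2*j ∧ 2*j < 2*s then 1 else 0)
          * qF p z (2*j+1) ^ (if (2*j+1) % 2 = 1 ∧ 2*m+1 ≤ 2*j+1 ∧ 2*j+1 < 2*s then 1 else 0)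
          = if j ∈ Finset.Ico m s then qF p z (2*j+1) else 1 := by
        intro j _
        rw [if_neg (by omega)]
        by_cases hj : m ≤ j ∧ j < s
        · rw [if_pos (by omega), if_pos (Finset.mem_Ico.2 hj)]
          simp
        · rw [if_neg (by omega), if_neg (by simp [Finset.mem_Ico]; omega)]
          simp
      rw [Finset.prod_congr rfl this, Finset.prod_ite_mem]
      congr 1
      rw [Finset.inter_eq_right]
      intro x hx
      simp only [Finset.mem_Ico] at hx
      exact Finset.mem_range.2 (by omega)
    · apply Finset.prod_congr rfl
      intro i _
      simp only [hε]
      rw [if_neg (by omega)]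

end Struct

section StructOdd

lemma qN_odd (p : ℕ → ℝ) (z : ℂ) (N : ℕ) (hne : ¬ zeck N 0 = 0) :
    ∃ QA : ℂ,
      fibF (2 * carryLen N + 1) ≤ N + 1 ∧
      qN p z (N+1) = qF p z (2 * carryLen N + 1) * QA ∧
      (∀ m, m ≤ carryLen N + 1 → qN p z (N + 1 - fibF (2*m-1))
          = (∏ j ∈ Finset.Icc m (carryLen N), qF p z (2*j)) * QA) := by
  have hε0 : zeck N 0 = 1 := by
    have := zeck_le_one N 0
    omega
  have hfind0 : carryLen N = Nat.find (exists_break1 N) := by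
    unfold carryLen
    rw [if_neg hne]
  obtain ⟨s, hgen⟩ : ∃ s, carryLen N = s := ⟨_, rfl⟩
  rw [hgen]
  have hfind : s = Nat.find (exists_break1 N) := by rw [← hgen, hfind0]
  have hpat : ∀ i, i < s → zeck N (2*i+2) = 1 ∧ zeck N (2*i+1) = 0 := by
    intro i hi
    rw [hfind] at hi
    exact not_not.1 (Nat.find_min (exists_break1 N) hi)
  have heven : ∀ i, i ≤ s → zeck N (2*i) = 1 := by
    intro i hi
    rcases Nat.eq_zero_or_pos i with h0 | hpos
    · rw [h0]
      simpa using hε0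
    · have := (hpat (i-1) (by omega)).1
      rw [show 2*(i-1)+2 = 2*i by omega] at this
      exact this
  have hodd : ∀ i, i ≤ s → zeck N (2*i+1) = 0 := by
    intro i hi
    have h1 := heven i hi
    have hnc := zeck_no_consec N (2*i)
    have := zeck_le_one N (2*i+1)
    omega
  have hspec : ¬(zeck N (2*s+2) = 1 ∧ zeck N (2*s+1) = 0) := by
    rw [hfind]
    exact Nat.find_spec (exists_break1 N)
  have h2s2 : zeck N (2*s+2) = 0 := by
    have := hodd s le_rfl
    have := zeck_le_one N (2*s+2)
    omega
  -- low partial sums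
  have htail : ∀ u, u ≤ s → ∑ i ∈ Finset.range (2*u+1), zeck N i * fibF i + 1
      = fibF (2*u+1) := by
    intro u
    induction u with
    | zero =>
      intro _
      rw [show (2*0+1 : ℕ) = 1 from rfl, Finset.sum_range_one, hε0]
      simp [fibF]
    | succ u ihu =>
      intro hu
      have h1 := heven (u+1) (by omega)
      have h2 := hodd u (by omega)
      rw [show 2*(u+1)+1 = (2*u+1)+1+1 by ring, Finset.sum_range_succ, Finset.sum_range_succ]
      rw [show (2*u+1)+1 = 2*(u+1) by ring, h1]
      rw [show 2*u+1 = 2*u+1 from rfl, h2]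
      have he : fibF (2*(u+1)+1) = fibF (2*(u+1)) + fibF (2*u+1) := by
        rw [show 2*(u+1)+1 = (2*u+1)+2 by ring, show 2*(u+1) = (2*u+1)+1 by ring]
        rfl
      have := ihu (by omega)
      omega
  set K := 2*s+3+(N+1) with hK
  have hKN : N < K := by omega
  have hNsum := zeck_sum N K hKN
  rw [hK, Finset.sum_range_add] at hNsum
  set Shigh := ∑ i ∈ Finset.range (N+1), zeck N (2*s+3+i) * fibF (2*s+3+i) with hSh
  have hlowN : ∑ i ∈ Finset.range (2*s+3), zeck N i * fibF i + 1 = fibF (2*s+1) := by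
    rw [show 2*s+3 = (2*s+1)+1+1 by ring, Finset.sum_range_succ, Finset.sum_range_succ]
    rw [show (2*s+1)+1 = 2*s+2 by ring, h2s2]
    have h2 := hodd s le_rfl
    rw [h2]
    simpa using htail s le_rfl
  have hShigh : Shigh + fibF (2*s+1) = N + 1 := by omega
  have hfub : fibF (2*s+1) ≤ N + 1 := by omega
  refine ⟨∏ i ∈ Finset.range (N+1), qF p z (2*s+3+i) ^ zeck N (2*s+3+i), hfub, ?_, ?_⟩
  · -- N+1
    set ε : ℕ → ℕ := fun i => if i < 2*s+3 then (if i = 2*s+1 then 1 else 0) else zeck N i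
      with hε
    have hz : ∀ i, zeck (N+1) i = ε i := by
      apply zeck_unique (N+1) ε K
      · intro i
        simp only [hε]
        split_ifs <;> simp [zeck_le_one]
      · intro i
        simp only [hε]
        split_ifs
        all_goals first
          | exact zeck_no_consec N i
          | omega
          | simp
      · intro i hi
        simp only [hε]
        rw [if_neg (by omega)]
        exact zeck_eq_zero_of_lt N i (by omega)
      · rw [Finset.sum_range_add]
        have hlow : ∑ i ∈ Finset.range (2*s+3), ε i * fibF i = fibF (2*s+1) := by
          have hc : ∑ i ∈ Finset.range (2*s+3), ε i * fibF i
              = ∑ i ∈ Finset.range (2*s+3), (if i = 2*s+1 then 1 else 0) * fibF i := by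
            apply Finset.sum_congr rfl
            intro i hi
            have hi' : i < 2*s+3 := Finset.mem_range.1 hi
            simp only [hε, if_pos hi']
          rw [hc]
          have hval := Finset.sum_eq_single_of_mem (s := Finset.range (2*s+3))
            (f := fun i => (if i = 2*s+1 then 1 else 0) * fibF i) (2*s+1)
            (Finset.mem_range.2 (by omega)) (fun b _ hb => by simp [hb])
          simpa using hval
        have hhigh : ∑ i ∈ Finset.range (N+1), ε (2*s+3+i) * fibF (2*s+3+i) = Shigh := by
          apply Finset.sum_congr rfl
          intro i _
          simp only [hε]
          rw [if_neg (by omega)]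
        rw [hlow, hhigh]
        omega
    rw [qN_eq_prod p z (N+1) K (by omega)]
    rw [Finset.prod_congr rfl (fun i _ => by rw [hz i])]
    rw [hK, Finset.prod_range_add]
    congr 1
    · have hc : (∏ i ∈ Finset.range (2*s+3), qF p z i ^ ε i)
          = ∏ i ∈ Finset.range (2*s+3), qF p z i ^ (if i = 2*s+1 then 1 else 0) := by
        apply Finset.prod_congr rfl
        intro i hi
        have hi' : i < 2*s+3 := Finset.mem_range.1 hi
        simp only [hε, if_pos hi']
      rw [hc]
      have hval := Finset.prod_eq_single_of_mem (s := Finset.range (2*s+3))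
        (f := fun i => qF p z i ^ (if i = 2*s+1 then 1 else 0)) (2*s+1)
        (Finset.mem_range.2 (by omega)) (fun b _ hb => by simp [hb])
      simpa using hval
    · apply Finset.prod_congr rfl
      intro i _
      simp only [hε]
      rw [if_neg (by omega)]
  · -- N+1 - fibF (2m-1)
    intro m hm
    have hfm : fibF (2*m-1) ≤ fibF (2*s+1) := fibF_mono (by omega)
    set ε : ℕ → ℕ := fun i =>
      if i < 2*s+3 then (if i % 2 = 0 ∧ 2*m ≤ i ∧ i ≤ 2*s then 1 else 0) else zeck N i
      with hε
    have hlowsum : ∑ j ∈ Finset.Icc m s, fibF (2*j) + fibF (2*m-1) = fibF (2*s+1) :=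
      sum_fib_even_Icc s m hm
    have hz : ∀ i, zeck (N + 1 - fibF (2*m-1)) i = ε i := by
      apply zeck_unique _ ε K
      · intro i
        simp only [hε]
        split_ifs <;> simp [zeck_le_one]
      · intro i
        simp only [hε]
        split_ifs
        all_goals first
          | exact zeck_no_consec N i
          | omega
          | simp
      · intro i hi
        simp only [hε]
        rw [if_neg (by omega)]
        exact zeck_eq_zero_of_lt N i (by omega)
      · rw [Finset.sum_range_add]
        have hlow : ∑ i ∈ Finset.range (2*s+3), ε i * fibF i
            = ∑ j ∈ Finset.Icc m s, fibF (2*j) := by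
          have hc : ∑ i ∈ Finset.range (2*s+3), ε i * fibF i
              = ∑ i ∈ Finset.range (2*s+3),
                  (if i % 2 = 0 ∧ 2*m ≤ i ∧ i ≤ 2*s then 1 else 0) * fibF i := by
            apply Finset.sum_congr rfl
            intro i hi
            have hi' : i < 2*s+3 := Finset.mem_range.1 hi
            simp only [hε, if_pos hi']
          rw [hc, show 2*s+3 = 2*(s+1)+1 by ring, Finset.sum_range_succ, pair_sum]
          rw [if_neg (by omega)]
          have : ∀ j ∈ Finset.range (s+1),
              (if (2*j) % 2 = 0 ∧ 2*m ≤ 2*j ∧ 2*j ≤ 2*s then 1 else 0) * fibF (2*j)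
              + (if (2*j+1) % 2 = 0 ∧ 2*m ≤ 2*j+1 ∧ 2*j+1 ≤ 2*s then 1 else 0) * fibF (2*j+1)
              = if j ∈ Finset.Icc m s then fibF (2*j) else 0 := by
            intro j _
            have hodd2 : (if (2*j+1) % 2 = 0 ∧ 2*m ≤ 2*j+1 ∧ 2*j+1 ≤ 2*s then (1:ℕ) else 0)
                = 0 := by
              rw [if_neg (by omega)]
            rw [hodd2]
            by_cases hj : m ≤ j ∧ j ≤ s
            · rw [if_pos (by omega), if_pos (Finset.mem_Icc.2 hj)]
              omega
            · rw [if_neg (by omega), if_neg (by simp [Finset.mem_Icc]; omega)]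
              simp
          rw [Finset.sum_congr rfl this, Finset.sum_ite_mem]
          have hint : Finset.range (s+1) ∩ Finset.Icc m s = Finset.Icc m s := by
            rw [Finset.inter_eq_right]
            intro x hx
            simp only [Finset.mem_Icc] at hx
            exact Finset.mem_range.2 (by omega)
          rw [hint]
          simp
        have hhigh : ∑ i ∈ Finset.range (N+1), ε (2*s+3+i) * fibF (2*s+3+i) = Shigh := by
          apply Finset.sum_congr rfl
          intro i _
          simp only [hε]
          rw [if_neg (by omega)]
        rw [hlow, hhigh]
        omega
    rw [qN_eq_prod p z _ K (by omega)]
    rw [Finset.prod_congr rfl (fun i _ => by rw [hz i])]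
    rw [hK, Finset.prod_range_add]
    congr 1
    · have hc : (∏ i ∈ Finset.range (2*s+3), qF p z i ^ ε i)
          = ∏ i ∈ Finset.range (2*s+3),
              qF p z i ^ (if i % 2 = 0 ∧ 2*m ≤ i ∧ i ≤ 2*s then 1 else 0) := by
        apply Finset.prod_congr rfl
        intro i hi
        have hi' : i < 2*s+3 := Finset.mem_range.1 hi
        simp only [hε, if_pos hi']
      rw [hc, show 2*s+3 = 2*(s+1)+1 by ring, Finset.prod_range_succ, pair_prod]
      rw [if_neg (by omega)]
      have : ∀ j ∈ Finset.range (s+1),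
          qF p z (2*j) ^ (if (2*j) % 2 = 0 ∧ 2*m ≤ 2*j ∧ 2*j ≤ 2*s then 1 else 0)
          * qF p z (2*j+1) ^ (if (2*j+1) % 2 = 0 ∧ 2*m ≤ 2*j+1 ∧ 2*j+1 ≤ 2*s then 1 else 0)
          = if j ∈ Finset.Icc m s then qF p z (2*j) else 1 := by
        intro j _
        have hodd2 : (if (2*j+1) % 2 = 0 ∧ 2*m ≤ 2*j+1 ∧ 2*j+1 ≤ 2*s then (1:ℕ) else 0)
            = 0 := by
          rw [if_neg (by omega)]
        rw [hodd2, pow_zero, mul_one]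
        by_cases hj : m ≤ j ∧ j ≤ s
        · rw [if_pos (by omega), if_pos (Finset.mem_Icc.2 hj)]
          simp
        · rw [if_neg (by omega), if_neg (by simp [Finset.mem_Icc]; omega)]
          simp
      rw [Finset.prod_congr rfl this, Finset.prod_ite_mem]
      have hint : Finset.range (s+1) ∩ Finset.Icc m s = Finset.Icc m s := by
        rw [Finset.inter_eq_right]
        intro x hx
        simp only [Finset.mem_Icc] at hx
        exact Finset.mem_range.2 (by omega)
      rw [hint]
      simp
    · apply Finset.prod_congr rfl
      intro i _
      simp only [hε]
      rw [if_neg (by omega)]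

end StructOdd

section Eig

lemma Smat_zero (p : ℕ → ℝ) (N M : ℕ) (h : N+2 ≤ M) : Smat p N M = 0 := by
  unfold Smat
  rw [if_neg (by omega : ¬ M = N)]
  have h1 : ¬ M = N + 1 := by omega
  split_ifs with h0
  · rw [Finset.sum_eq_zero]
    · simp
    · intro m _
      rw [if_neg (by omega : ¬ M = N + 1 - fibF (2*m))]
  · rw [Finset.sum_eq_zero]
    · simp
    · intro m _
      rw [if_neg (by omega : ¬ M = N + 1 - fibF (2*m-1))]

lemma eig_finite (p : ℕ → ℝ) (lam : ℂ) (v : ℕ → ℂ)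
    (heig : ∀ i : ℕ, ∑' j : ℕ, (Smat p i j : ℂ) * v j = lam * v i) (N : ℕ) :
    ∑ M ∈ Finset.range (N+2), (Smat p N M : ℂ) * v M = lam * v N := by
  rw [← heig N]
  symm
  apply tsum_eq_sum
  intro M hM
  have : N + 2 ≤ M := by
    by_contra hc
    exact hM (Finset.mem_range.2 (by omega))
  rw [Smat_zero p N M this]
  simp

lemma eig_even (p : ℕ → ℝ) (lam : ℂ) (v : ℕ → ℂ)
    (heig : ∀ i : ℕ, ∑' j : ℕ, (Smat p i j : ℂ) * v j = lam * v i) (N : ℕ)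
    (hε0 : zeck N 0 = 0) :
    ((1:ℂ) - (p 1 : ℂ)) * v N + (Pprod p (carryLen N + 1) : ℂ) * v (N+1)
      + ∑ m ∈ Finset.Icc 1 (carryLen N),
          (Pprod p m : ℂ) * (1 - (p (m+1) : ℂ)) * v (N + 1 - fibF (2*m))
    = lam * v N := by
  have h := eig_finite p lam v heig N
  have hterm : ∀ M, (Smat p N M : ℂ) * v M
      = (if M = N then ((1:ℂ) - (p 1:ℂ)) * v M else 0)
        + ((if M = N+1 then (Pprod p (carryLen N + 1) : ℂ) * v M else 0)
          + ∑ m ∈ Finset.Icc 1 (carryLen N),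
              (if M = N + 1 - fibF (2*m) then (Pprod p m : ℂ) * (1 - (p (m+1):ℂ)) * v M
                else 0)) := by
    intro M
    unfold Smat
    rw [if_pos hε0]
    push_cast [apply_ite Complex.ofReal]
    rw [add_mul, add_mul, Finset.sum_mul]
    congr 1
    · split_ifs <;> simp
    congr 1
    · split_ifs <;> simp
    · apply Finset.sum_congr rfl
      intro m _
      split_ifs <;> simp
  have hsum2 : ∑ M ∈ Finset.range (N+2), (Smat p N M : ℂ) * v M
      = ∑ M ∈ Finset.range (N+2),
          ((if M = N then ((1:ℂ) - (p 1:ℂ)) * v M else 0)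
            + ((if M = N+1 then (Pprod p (carryLen N + 1) : ℂ) * v M else 0)
              + ∑ m ∈ Finset.Icc 1 (carryLen N),
                  (if M = N + 1 - fibF (2*m) then (Pprod p m : ℂ) * (1 - (p (m+1):ℂ)) * v M
                    else 0))) :=
    Finset.sum_congr rfl (fun M _ => hterm M)
  rw [hsum2, Finset.sum_add_distrib, Finset.sum_add_distrib] at h
  rw [Finset.sum_ite_eq' (Finset.range (N+2)) N (fun M => ((1:ℂ) - (p 1:ℂ)) * v M),
    if_pos (Finset.mem_range.2 (by omega))] at h
  rw [Finset.sum_ite_eq' (Finset.range (N+2)) (N+1)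
      (fun M => (Pprod p (carryLen N + 1) : ℂ) * v M),
    if_pos (Finset.mem_range.2 (by omega))] at h
  rw [Finset.sum_comm] at h
  have e3 : ∀ m ∈ Finset.Icc 1 (carryLen N),
      ∑ M ∈ Finset.range (N+2),
        (if M = N + 1 - fibF (2*m) then (Pprod p m : ℂ) * (1 - (p (m+1):ℂ)) * v M else 0)
      = (Pprod p m : ℂ) * (1 - (p (m+1):ℂ)) * v (N + 1 - fibF (2*m)) := by
    intro m _
    rw [Finset.sum_ite_eq' (Finset.range (N+2)) (N + 1 - fibF (2*m))
        (fun M => (Pprod p m : ℂ) * (1 - (p (m+1):ℂ)) * v M),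
      if_pos (Finset.mem_range.2 (by omega))]
  rw [Finset.sum_congr rfl e3] at h
  rw [← h]
  ring

lemma eig_odd (p : ℕ → ℝ) (lam : ℂ) (v : ℕ → ℂ)
    (heig : ∀ i : ℕ, ∑' j : ℕ, (Smat p i j : ℂ) * v j = lam * v i) (N : ℕ)
    (hε0 : ¬ zeck N 0 = 0) :
    ((1:ℂ) - (p 1 : ℂ)) * v N + (Pprod p (carryLen N + 2) : ℂ) * v (N+1)
      + ∑ m ∈ Finset.Icc 1 (carryLen N + 1),
          (Pprod p m : ℂ) * (1 - (p (m+1) : ℂ)) * v (N + 1 - fibF (2*m-1))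
    = lam * v N := by
  have h := eig_finite p lam v heig N
  have hterm : ∀ M, (Smat p N M : ℂ) * v M
      = (if M = N then ((1:ℂ) - (p 1:ℂ)) * v M else 0)
        + ((if M = N+1 then (Pprod p (carryLen N + 2) : ℂ) * v M else 0)
          + ∑ m ∈ Finset.Icc 1 (carryLen N + 1),
              (if M = N + 1 - fibF (2*m-1) then (Pprod p m : ℂ) * (1 - (p (m+1):ℂ)) * v M
                else 0)) := by
    intro M
    unfold Smat
    rw [if_neg hε0]
    push_cast [apply_ite Complex.ofReal]
    rw [add_mul, add_mul, Finset.sum_mul]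
    congr 1
    · split_ifs <;> simp
    congr 1
    · split_ifs <;> simp
    · apply Finset.sum_congr rfl
      intro m _
      split_ifs <;> simp
  have hsum2 : ∑ M ∈ Finset.range (N+2), (Smat p N M : ℂ) * v M
      = ∑ M ∈ Finset.range (N+2),
          ((if M = N then ((1:ℂ) - (p 1:ℂ)) * v M else 0)
            + ((if M = N+1 then (Pprod p (carryLen N + 2) : ℂ) * v M else 0)
              + ∑ m ∈ Finset.Icc 1 (carryLen N + 1),
                  (if M = N + 1 - fibF (2*m-1) then (Pprod p m : ℂ) * (1 - (p (m+1):ℂ)) * v M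
                    else 0))) :=
    Finset.sum_congr rfl (fun M _ => hterm M)
  rw [hsum2, Finset.sum_add_distrib, Finset.sum_add_distrib] at h
  rw [Finset.sum_ite_eq' (Finset.range (N+2)) N (fun M => ((1:ℂ) - (p 1:ℂ)) * v M),
    if_pos (Finset.mem_range.2 (by omega))] at h
  rw [Finset.sum_ite_eq' (Finset.range (N+2)) (N+1)
      (fun M => (Pprod p (carryLen N + 2) : ℂ) * v M),
    if_pos (Finset.mem_range.2 (by omega))] at h
  rw [Finset.sum_comm] at h
  have e3 : ∀ m ∈ Finset.Icc 1 (carryLen N + 1),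
      ∑ M ∈ Finset.range (N+2),
        (if M = N + 1 - fibF (2*m-1) then (Pprod p m : ℂ) * (1 - (p (m+1):ℂ)) * v M else 0)
      = (Pprod p m : ℂ) * (1 - (p (m+1):ℂ)) * v (N + 1 - fibF (2*m-1)) := by
    intro m _
    rw [Finset.sum_ite_eq' (Finset.range (N+2)) (N + 1 - fibF (2*m-1))
        (fun M => (Pprod p m : ℂ) * (1 - (p (m+1):ℂ)) * v M),
      if_pos (Finset.mem_range.2 (by omega))]
  rw [Finset.sum_congr rfl e3] at h
  rw [← h]
  ring

end Eig

section Key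

lemma key_lemma (p : ℕ → ℝ) (hp : ∀ i, 1 ≤ i → 0 < p i)
    (lam : ℂ) (v : ℕ → ℂ)
    (heig : ∀ i : ℕ, ∑' j : ℕ, (Smat p i j : ℂ) * v j = lam * v i) :
    ∀ N, v N = qN p lam N * v 0 := by
  have hpne : ∀ i, 1 ≤ i → p i ≠ 0 := fun i hi => ne_of_gt (hp i hi)
  have hq0 : (p 1 : ℂ) * qF p lam 0 = lam - (1 - (p 1:ℂ)) := by
    have hr : qF p lam 0 = (lam - (1 - (p 1:ℂ))) / (p 1:ℂ) := rfl
    rw [hr]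
    have h1 : (p 1 : ℂ) ≠ 0 := by exact_mod_cast hpne 1 le_rfl
    field_simp
  intro N
  induction N using Nat.strong_induction_on with
  | _ N ih =>
    match N with
    | 0 =>
      have hz : qN p lam 0 = 1 := by
        unfold qN
        apply Finset.prod_eq_one
        intro i _
        have h0 : zeck 0 i = 0 := by rw [zeck]; simp
        rw [h0, pow_zero]
      rw [hz, one_mul]
    | (n+1) =>
      by_cases hε0 : zeck n 0 = 0
      · obtain ⟨QA, hfub, hq1, hqm⟩ := qN_even p lam n hε0
        have E := eig_even p lam v heig n hε0
        have hPne : ((Pprod p (carryLen n + 1) : ℝ) : ℂ) ≠ 0 :=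
          Complex.ofReal_ne_zero.mpr (ne_of_gt (Pprod_pos p hp _))
        have hT0 : n + 1 - fibF (2*0) = n := by
          have h1 : fibF (2*0) = 1 := rfl
          omega
        have hvN : v n = (∏ j ∈ Finset.Ico 0 (carryLen n), qF p lam (2*j+1))
            * (QA * v 0) := by
          have h1 := hqm 0 (Nat.zero_le _)
          rw [hT0] at h1
          rw [ih n (by omega), h1]
          ring
        have hvsum : ∑ m ∈ Finset.Icc 1 (carryLen n),
            (Pprod p m : ℂ) * (1 - (p (m+1) : ℂ)) * v (n + 1 - fibF (2*m))
            = (∑ m ∈ Finset.Icc 1 (carryLen n), (Pprod p m : ℂ) * (1 - (p (m+1) : ℂ))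
                * ∏ j ∈ Finset.Ico m (carryLen n), qF p lam (2*j+1)) * (QA * v 0) := by
          rw [Finset.sum_mul]
          apply Finset.sum_congr rfl
          intro m hm
          obtain ⟨hm1, hm2⟩ := Finset.mem_Icc.1 hm
          have harg : n + 1 - fibF (2*m) < n + 1 := by
            have := fibF_pos (2*m)
            omega
          rw [ih (n + 1 - fibF (2*m)) harg, hqm m hm2]
          ring
        have hid := idE p hpne lam (carryLen n)
        rw [Finset.range_eq_Ico] at hid
        rw [hvsum, hvN] at E
        apply mul_left_cancel₀ hPne
        rw [hq1]
        linear_combination E + (QA * v 0) * hid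
          - ((∏ j ∈ Finset.Ico 0 (carryLen n), qF p lam (2*j+1)) * (QA * v 0)) * hq0
      · obtain ⟨QA, hfub, hq1, hqm⟩ := qN_odd p lam n hε0
        have E := eig_odd p lam v heig n hε0
        have hPne : ((Pprod p (carryLen n + 2) : ℝ) : ℂ) ≠ 0 :=
          Complex.ofReal_ne_zero.mpr (ne_of_gt (Pprod_pos p hp _))
        have hT0 : n + 1 - fibF (2*0-1) = n := by
          have h1 : fibF (2*0-1) = 1 := rfl
          omega
        have hvN : v n = (∏ j ∈ Finset.Icc 0 (carryLen n), qF p lam (2*j))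
            * (QA * v 0) := by
          have h1 := hqm 0 (by omega)
          rw [hT0] at h1
          rw [ih n (by omega), h1]
          ring
        have hvsum : ∑ m ∈ Finset.Icc 1 (carryLen n + 1),
            (Pprod p m : ℂ) * (1 - (p (m+1) : ℂ)) * v (n + 1 - fibF (2*m-1))
            = (∑ m ∈ Finset.Icc 1 (carryLen n + 1), (Pprod p m : ℂ) * (1 - (p (m+1) : ℂ))
                * ∏ j ∈ Finset.Icc m (carryLen n), qF p lam (2*j)) * (QA * v 0) := by
          rw [Finset.sum_mul]
          apply Finset.sum_congr rfl
          intro m hm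
          obtain ⟨hm1, hm2⟩ := Finset.mem_Icc.1 hm
          have harg : n + 1 - fibF (2*m-1) < n + 1 := by
            have := fibF_pos (2*m-1)
            omega
          rw [ih (n + 1 - fibF (2*m-1)) harg, hqm m hm2]
          ring
        have hid := idO p hpne lam (carryLen n)
        have hrange : Finset.range (carryLen n + 1) = Finset.Icc 0 (carryLen n) := by
          rw [Finset.range_eq_Ico, Finset.Ico_add_one_right_eq_Icc]
        rw [hrange] at hid
        rw [hvsum, hvN] at E
        apply mul_left_cancel₀ hPne
        rw [hq1]
        linear_combination E + (QA * v 0) * hid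
          - ((∏ j ∈ Finset.Icc 0 (carryLen n), qF p lam (2*j)) * (QA * v 0)) * hq0

end Key

section Final

lemma zeck_fib (n : ℕ) : ∀ i, zeck (fibF n) i = if i = n then 1 else 0 := by
  apply zeck_unique (fibF n) _ (n+1)
  · intro i
    split_ifs <;> simp
  · intro i
    by_cases h1 : i = n <;> by_cases h2 : i+1 = n <;> simp [h1, h2] <;> omega
  · intro i hi
    rw [if_neg (by omega)]
  · symm
    have hval := Finset.sum_eq_single_of_mem (s := Finset.range (n+1))
      (f := fun i => (if i = n then 1 else 0) * fibF i) n
      (Finset.mem_range.2 (by omega)) (fun b _ hb => by simp [hb])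
    simpa using hval

lemma qN_fib (p : ℕ → ℝ) (z : ℂ) (n : ℕ) : qN p z (fibF n) = qF p z n := by
  have hn : n < fibF n := lt_fibF n
  rw [qN_eq_prod p z (fibF n) (fibF n + 1) (by omega)]
  have hc : (∏ i ∈ Finset.range (fibF n + 1), qF p z i ^ zeck (fibF n) i)
      = ∏ i ∈ Finset.range (fibF n + 1), qF p z i ^ (if i = n then 1 else 0) := by
    apply Finset.prod_congr rfl
    intro i _
    rw [zeck_fib n i]
  rw [hc]
  have hval := Finset.prod_eq_single_of_mem (s := Finset.range (fibF n + 1))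
    (f := fun i => qF p z i ^ (if i = n then 1 else 0)) n
    (Finset.mem_range.2 (by omega)) (fun b _ hb => by simp [hb])
  simpa using hval

lemma qN_split (p : ℕ → ℝ) (z : ℂ) (n m : ℕ) (hn : 2 ≤ n) (hmf : m < fibF (n-1)) :
    qN p z (fibF n + m) = qF p z n * qN p z m := by
  have hmn1 : zeck m (n-1) = 0 := zeck_eq_zero_of_lt_fib m (n-1) hmf
  have hfle : ∀ j, n - 1 ≤ j → m < fibF j := fun j hj =>
    lt_of_lt_of_le hmf (fibF_mono hj)
  have hmn : zeck m n = 0 := zeck_eq_zero_of_lt_fib m n (hfle n (by omega))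
  have hmn2 : zeck m (n+1) = 0 := zeck_eq_zero_of_lt_fib m (n+1) (hfle (n+1) (by omega))
  set K := n + 1 + m with hK
  set ε : ℕ → ℕ := fun i => if i = n then 1 else zeck m i with hε
  have hz : ∀ i, zeck (fibF n + m) i = ε i := by
    apply zeck_unique _ ε K
    · intro i
      simp only [hε]
      split_ifs <;> simp [zeck_le_one]
    · intro i
      simp only [hε]
      by_cases h1 : i = n
      · rw [if_pos h1, if_neg (by omega)]
        subst h1
        rw [hmn2]
        simp
      · rw [if_neg h1]
        by_cases h2 : i+1 = n
        · rw [if_pos h2]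
          have h3 : i = n-1 := by omega
          rw [h3, hmn1]
          simp
        · rw [if_neg h2]
          exact zeck_no_consec m i
    · intro i hi
      simp only [hε]
      rw [if_neg (by omega)]
      exact zeck_eq_zero_of_lt m i (by omega)
    · have hmem : n ∈ Finset.range K := Finset.mem_range.2 (by omega)
      rw [← Finset.add_sum_erase _ (fun i => ε i * fibF i) hmem]
      have h1 : ε n * fibF n = fibF n := by simp [hε]
      have h2 : ∑ i ∈ (Finset.range K).erase n, ε i * fibF i
          = ∑ i ∈ (Finset.range K).erase n, zeck m i * fibF i := by
        apply Finset.sum_congr rfl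
        intro i hi
        have : i ≠ n := Finset.ne_of_mem_erase hi
        simp [hε, this]
      have h3 : ∑ i ∈ (Finset.range K).erase n, zeck m i * fibF i
          = ∑ i ∈ Finset.range K, zeck m i * fibF i := by
        rw [← Finset.add_sum_erase _ (fun i => zeck m i * fibF i) hmem, hmn]
        simp
      rw [h1, h2, h3, zeck_sum m K (by omega)]
  -- product
  have hKbig : fibF n + m < n + 1 + (fibF n + m) := by omega
  rw [qN_eq_prod p z (fibF n + m) (n + 1 + (fibF n + m)) hKbig]
  rw [Finset.prod_congr rfl (fun i _ => by rw [hz i])]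
  have hmem : n ∈ Finset.range (n + 1 + (fibF n + m)) := Finset.mem_range.2 (by omega)
  rw [← Finset.mul_prod_erase _ (fun i => qF p z i ^ ε i) hmem]
  have h1 : qF p z n ^ ε n = qF p z n := by simp [hε]
  have h2 : ∏ i ∈ (Finset.range (n + 1 + (fibF n + m))).erase n, qF p z i ^ ε i
      = ∏ i ∈ (Finset.range (n + 1 + (fibF n + m))).erase n, qF p z i ^ zeck m i := by
    apply Finset.prod_congr rfl
    intro i hi
    have : i ≠ n := Finset.ne_of_mem_erase hi
    simp [hε, this]
  have h3 : ∏ i ∈ (Finset.range (n + 1 + (fibF n + m))).erase n, qF p z i ^ zeck m i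
      = ∏ i ∈ Finset.range (n + 1 + (fibF n + m)), qF p z i ^ zeck m i := by
    rw [← Finset.mul_prod_erase _ (fun i => qF p z i ^ zeck m i) hmem, hmn]
    simp
  rw [h1, h2, h3, ← qN_eq_prod p z m _ (by omega)]

end Final

/-- Let `λ ∈ ℂ` and let `v` be a bounded complex sequence with
`S v = λ v`.  Then `v k = q_k(λ) * v 0` for all `k ≥ 1`; in particular for every
`n ≥ 2` and `0 < m < F (n-1)` one has `v (F n + m) * v 0 = v (F n) * v m`. -/
theorem stmt8 (p : ℕ → ℝ) (hp : ∀ i, 1 ≤ i → 0 < p i ∧ p i ≤ 1)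
    (lam : ℂ) (v : ℕ → ℂ) (hv : ∃ C : ℝ, ∀ i, ‖v i‖ ≤ C)
    (heig : ∀ i : ℕ, ∑' j : ℕ, (Smat p i j : ℂ) * v j = lam * v i) :
    (∀ k, 1 ≤ k → v k = qN p lam k * v 0) ∧
    (∀ n m : ℕ, 2 ≤ n → 0 < m → m < fibF (n-1) →
      v (fibF n + m) * v 0 = v (fibF n) * v m) := by
  
  have hp' : ∀ i, 1 ≤ i → 0 < p i := fun i hi => (hp i hi).1
  have hkey := key_lemma p hp' lam v heig
  constructor
  · intro k _
    exact hkey k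
  · intro n m hn hm hmf
    have hqs : qN p lam (fibF n + m) = qF p lam n * qN p lam m :=
      qN_split p lam n m hn hmf
    have hqf : qN p lam (fibF n) = qF p lam n := qN_fib p lam n
    rw [hkey (fibF n + m), hkey (fibF n), hkey m, hqs, hqf]
    ring
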